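/- For a pure state ρ = |ψ⟩⟨ψ| and a state σ (with σ invertible on the support containing |ψ⟩), the geometric relative entropy and the max-relative entropy coincide: D̂(ρ‖σ) = D_max(ρ‖σ) = log ⟨ψ| σ^{−1} |ψ⟩. -/

import Mathlib

open Matrix
open scoped Kronecker ComplexOrder
attribute [local instance] Classical.propDecidable

noncomputable section

variable {d dA dB : Type*} [Fintype d] [DecidableEq d]
  [Fintype dA] [DecidableEq dA] [Fintype dB] [DecidableEq dB]

def cfcM (f : ℝ → ℝ) (A : Matrix d d ℂ) : Matrix d d ℂ :=
  if h : A.IsHermitian then h.cfc f else 0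

def mpow (A : Matrix d d ℂ) (α : ℝ) : Matrix d d ℂ := cfcM (fun x => x ^ α) A

def trR (A : Matrix d d ℂ) : ℝ := (A.trace).re

def MLE (A B : Matrix d d ℂ) : Prop := (B - A).PosSemidef

def suppLE (P Q : Matrix d d ℂ) : Prop := ∀ v, Q.mulVec v = 0 → P.mulVec v = 0

def IsState (ρ : Matrix d d ℂ) : Prop := ρ.PosSemidef ∧ trR ρ = 1

def SubState (ρ : Matrix d d ℂ) : Prop := ρ.PosSemidef ∧ trR ρ ≤ 1

def relEnt (P Q : Matrix d d ℂ) : EReal :=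
  if suppLE P Q then
    ((trR (P * (cfcM (Real.logb 2) P - cfcM (Real.logb 2) Q)) / trR P : ℝ) : EReal)
  else ⊤

def sandD (α : ℝ) (P Q : Matrix d d ℂ) : EReal :=
  if α = 1 then relEnt P Q
  else if (α < 1 ∧ P * Q ≠ 0) ∨ suppLE P Q then
    (((α - 1)⁻¹ * Real.logb 2
      (trR (mpow (mpow Q (-(α-1)/(2*α)) * P * mpow Q (-(α-1)/(2*α))) α) / trR P) : ℝ) : EReal)
  else ⊤

def Dmax (P Q : Matrix d d ℂ) : EReal :=
  sInf {x : EReal | ∃ l : ℝ, x = (l : EReal) ∧ MLE P ((2:ℝ) ^ l • Q)}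

def traceNorm (X : Matrix d d ℂ) : ℝ := trR (cfcM Real.sqrt (Xᴴ * X))

def genFid (ρ σ : Matrix d d ℂ) : ℝ :=
  (traceNorm (mpow ρ (1/2) * mpow σ (1/2)) + Real.sqrt ((1 - trR ρ) * (1 - trR σ)))^2

def purDist (ρ σ : Matrix d d ℂ) : ℝ := Real.sqrt (1 - genFid ρ σ)

def pBall (ε : ℝ) (ρ : Matrix d d ℂ) : Set (Matrix d d ℂ) :=
  {τ | τ.PosSemidef ∧ trR τ ≤ 1 ∧ purDist ρ τ ≤ ε}

def sDmax (ε : ℝ) (ρ η : Matrix d d ℂ) : EReal :=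
  sInf {x : EReal | ∃ τ ∈ pBall ε ρ, x = Dmax τ η}

/-- Sandwiched α-Rényi conditional entropy `H̃↑_α(A|B)` (supremum over σ_B). -/
def condSandUp (α : ℝ) (ρ : Matrix (dA × dB) (dA × dB) ℂ) : EReal :=
  sSup {x : EReal | ∃ σ : Matrix dB dB ℂ, IsState σ ∧
    x = - sandD α ρ ((1 : Matrix dA dA ℂ) ⊗ₖ σ)}

/-- Partial trace over the A system. -/
def ptrA (ρ : Matrix (dA × dB) (dA × dB) ℂ) : Matrix dB dB ℂ :=
  Matrix.of fun b b' => ∑ a : dA, ρ (a, b) (a, b')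

/-- Partial trace over the B system. -/
def ptrB (ρ : Matrix (dA × dB) (dA × dB) ℂ) : Matrix dA dA ℂ :=
  Matrix.of fun a a' => ∑ b : dB, ρ (a, b) (a', b)

/-- Sandwiched α-Rényi conditional entropy `H̃↓_α(A|B)`. -/
def condSandDown (α : ℝ) (ρ : Matrix (dA × dB) (dA × dB) ℂ) : EReal :=
  - sandD α ρ ((1 : Matrix dA dA ℂ) ⊗ₖ ptrA ρ)

/-- ε-smooth sandwiched α-Rényi conditional entropy. -/
def condSandUpSm (α ε : ℝ) (ρ : Matrix (dA × dB) (dA × dB) ℂ) : EReal :=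
  sSup {x : EReal | ∃ τ ∈ pBall ε ρ, x = condSandUp α τ}

/-- Min-entropy `H_min(A|B)`. -/
def Hmin (ρ : Matrix (dA × dB) (dA × dB) ℂ) : EReal :=
  sSup {x : EReal | ∃ l : ℝ, x = (l : EReal) ∧ ∃ σ : Matrix dB dB ℂ, IsState σ ∧
    MLE ρ ((2:ℝ) ^ (-l) • ((1 : Matrix dA dA ℂ) ⊗ₖ σ))}

/-- Smooth min-entropy `H^ε_min(A|B)`. -/
def HminSm (ε : ℝ) (ρ : Matrix (dA × dB) (dA × dB) ℂ) : EReal :=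
  sSup {x : EReal | ∃ τ ∈ pBall ε ρ, x = Hmin τ}

/-- von Neumann entropy (base 2). -/
def vN (ρ : Matrix d d ℂ) : ℝ := - trR (cfcM (fun x => x * Real.logb 2 x) ρ)

/-- von Neumann conditional entropy `H(A|B)`. -/
def vNCond (ρ : Matrix (dA × dB) (dA × dB) ℂ) : ℝ := vN ρ - vN (ptrA ρ)

def g0 (x : ℝ) : ℝ := - Real.logb 2 (1 - Real.sqrt (1 - x^2))

def g1 (x y : ℝ) : ℝ := g0 x - Real.logb 2 (1 - y^2)


/-- Geometric (Belavkin-Staszewski) relative entropy (base 2), for invertible σ. -/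
def geomRel (ρ σ : Matrix d d ℂ) : ℝ :=
  trR (ρ * cfcM (Real.logb 2) (mpow ρ (1/2) * σ⁻¹ * mpow ρ (1/2)))


section AuxB2
variable {d : Type*} [Fintype d] [DecidableEq d]

lemma auxB2_coe_smul (r : ℝ) (A : Matrix d d ℂ) : (r : ℂ) • A = r • A := by
  ext i j; simp [Complex.real_smul]

lemma auxB2_cfc_eq (A : Matrix d d ℂ) (hA : A.IsHermitian) (a : ℝ)
    (hAA : A * A = a • A) (f : ℝ → ℝ) (hf0 : f 0 = 0) :
    hA.cfc f = (if a = 0 then 0 else f a / a : ℝ) • A := by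
  set c : ℝ := if a = 0 then 0 else f a / a with hc
  have key : ∀ i, f (hA.eigenvalues i) = c * hA.eigenvalues i := by
    intro i
    set μ := hA.eigenvalues i with hμ
    set v := ⇑(hA.eigenvectorBasis i) with hvdef
    have hv : A *ᵥ v = μ • v := hA.mulVec_eigenvectorBasis i
    have hv0 : v ≠ 0 := by
      intro h
      exact hA.eigenvectorBasis.orthonormal.ne_zero i (by ext j; exact congrFun h j)
    have hμμ : μ * μ = a * μ := by
      have h1 : (A * A) *ᵥ v = (μ * μ) • v := by
        rw [← Matrix.mulVec_mulVec, hv, Matrix.mulVec_smul, hv, smul_smul]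
      have h2 : (a • A) *ᵥ v = (a * μ) • v := by
        rw [Matrix.smul_mulVec, hv, smul_smul]
      have h3 : (μ * μ - a * μ) • v = 0 := by
        rw [sub_smul, ← h1, ← h2, hAA, sub_self]
      rcases smul_eq_zero.mp h3 with h | h
      · linarith [sub_eq_zero.mp (by exact_mod_cast h)]
      · exact absurd h hv0
    have : μ = 0 ∨ μ = a := by
      rcases mul_eq_zero.mp (show μ * (μ - a) = 0 by ring_nf; linarith) with h | h
      · exact Or.inl h
      · exact Or.inr (by linarith [sub_eq_zero.mp h])
    rcases this with h | h
    · rw [h, hf0, mul_zero]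
    · rw [h]
      by_cases ha : a = 0
      · rw [ha, hf0, mul_zero]
      · rw [hc, if_neg ha, div_mul_cancel₀ _ ha]
  have hdiag : Matrix.diagonal (RCLike.ofReal ∘ f ∘ hA.eigenvalues) =
      (c : ℂ) • Matrix.diagonal ((RCLike.ofReal : ℝ → ℂ) ∘ hA.eigenvalues) := by
    ext i j
    rcases eq_or_ne i j with rfl | h
    · simp only [Matrix.diagonal_apply_eq, Matrix.smul_apply, Function.comp_apply, key i,
        smul_eq_mul]
      push_cast
      rfl
    · simp [Matrix.diagonal_apply_ne _ h]
  rw [Matrix.IsHermitian.cfc, hdiag, map_smul, ← hA.spectral_theorem,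
    auxB2_coe_smul]

lemma auxB2_vmv_herm (ψ : d → ℂ) : (Matrix.vecMulVec ψ (star ψ)).IsHermitian := by
  ext i j
  simp [Matrix.conjTranspose_apply, Matrix.vecMulVec_apply, mul_comm]

lemma auxB2_vmv_mulVec (ψ w : d → ℂ) :
    (Matrix.vecMulVec ψ (star ψ)) *ᵥ w = (star ψ ⬝ᵥ w) • ψ := by
  ext i
  simp only [Matrix.mulVec, Matrix.vecMulVec_apply, dotProduct, Pi.smul_apply,
    smul_eq_mul, Pi.star_apply, Finset.sum_mul]
  exact Finset.sum_congr rfl fun j _ => by ring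

lemma auxB2_rho_mul (ψ : d → ℂ) (B : Matrix d d ℂ) :
    Matrix.vecMulVec ψ (star ψ) * B * Matrix.vecMulVec ψ (star ψ)
      = (star ψ ⬝ᵥ B *ᵥ ψ) • Matrix.vecMulVec ψ (star ψ) := by
  ext i j
  simp only [Matrix.mul_apply, Matrix.vecMulVec_apply, Matrix.smul_apply, smul_eq_mul,
    dotProduct, Matrix.mulVec, Pi.star_apply, Finset.sum_mul, Finset.mul_sum]
  rw [Finset.sum_comm]
  exact Finset.sum_congr rfl fun k _ => Finset.sum_congr rfl fun m _ => by ring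

lemma auxB2_cs (x y : d → ℂ) :
    Complex.normSq (star x ⬝ᵥ y) ≤ (star x ⬝ᵥ x).re * (star y ⬝ᵥ y).re := by
  let x' : EuclideanSpace ℂ d := (WithLp.equiv 2 _).symm x
  let y' : EuclideanSpace ℂ d := (WithLp.equiv 2 _).symm y
  have h1 : (inner ℂ x' y' : ℂ) = star x ⬝ᵥ y :=
    (EuclideanSpace.inner_toLp_toLp x y).trans (dotProduct_comm _ _)
  have h2 : ‖(inner ℂ x' y' : ℂ)‖ ≤ ‖x'‖ * ‖y'‖ := norm_inner_le_norm (𝕜 := ℂ) x' y'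
  have hx : ‖x'‖ ^ 2 = (star x ⬝ᵥ x).re := by
    rw [← inner_self_eq_norm_sq (𝕜 := ℂ),
      show (inner ℂ x' x' : ℂ) = star x ⬝ᵥ x from
        (EuclideanSpace.inner_toLp_toLp x x).trans (dotProduct_comm _ _)]
    rfl
  have hy : ‖y'‖ ^ 2 = (star y ⬝ᵥ y).re := by
    rw [← inner_self_eq_norm_sq (𝕜 := ℂ),
      show (inner ℂ y' y' : ℂ) = star y ⬝ᵥ y from
        (EuclideanSpace.inner_toLp_toLp y y).trans (dotProduct_comm _ _)]
    rfl
  have h3 : Complex.normSq (star x ⬝ᵥ y) = ‖(inner ℂ x' y' : ℂ)‖ ^ 2 := by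
    rw [h1, ← Complex.sq_norm]
  rw [h3, ← hx, ← hy]
  calc ‖(inner ℂ x' y' : ℂ)‖ ^ 2 ≤ (‖x'‖ * ‖y'‖) ^ 2 := by
        apply sq_le_sq' _ h2
        nlinarith [norm_nonneg (inner ℂ x' y' : ℂ), mul_nonneg (norm_nonneg x') (norm_nonneg y')]
    _ = ‖x'‖ ^ 2 * ‖y'‖ ^ 2 := by ring

end AuxB2

/-- Lemma B.2: for a pure state, the geometric relative entropy and the
max-relative entropy coincide and equal `log ⟨ψ|σ⁻¹|ψ⟩`. -/
theorem geomRel_pure_eq_Dmax {d : Type*} [Fintype d] [DecidableEq d]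
    (ψ : d → ℂ) (hψ : star ψ ⬝ᵥ ψ = 1)
    (σ : Matrix d d ℂ) (hσ : σ.PosDef) (hσ1 : trR σ = 1) :
    geomRel (Matrix.vecMulVec ψ (star ψ)) σ =
        Real.logb 2 (star ψ ⬝ᵥ σ⁻¹.mulVec ψ).re ∧
      Dmax (Matrix.vecMulVec ψ (star ψ)) σ =
        ((Real.logb 2 (star ψ ⬝ᵥ σ⁻¹.mulVec ψ).re : ℝ) : EReal) := by
  have hρH : (Matrix.vecMulVec ψ (star ψ)).IsHermitian := auxB2_vmv_herm ψ
  set ρ := Matrix.vecMulVec ψ (star ψ) with hρdef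
  have hρ2 : ρ * ρ = ρ := by
    have h := auxB2_rho_mul ψ 1
    rw [Matrix.mul_one] at h
    rw [hρdef, h, Matrix.one_mulVec, hψ, one_smul]
  have hψ0 : ψ ≠ 0 := by
    intro h
    rw [h] at hψ
    simp at hψ
  have hσi : σ⁻¹.PosDef := hσ.inv
  set z := star ψ ⬝ᵥ σ⁻¹ *ᵥ ψ with hzdef
  have hzpos : 0 < z := hσi.dotProduct_mulVec_pos hψ0
  set cr := z.re with hcrdef
  have hcrpos : 0 < cr := by
    have := (Complex.lt_def.mp hzpos).1
    simpa using this
  have hzre : z = (cr : ℂ) := by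
    have him := (Complex.lt_def.mp hzpos).2
    apply Complex.ext <;> simp [← him, hcrdef]
  -- geometric part
  have hmpow : mpow ρ (1/2) = ρ := by
    rw [mpow, cfcM, dif_pos hρH,
      auxB2_cfc_eq ρ hρH 1 (by rw [hρ2, one_smul]) _ (by simp [Real.zero_rpow])]
    simp [Real.one_rpow]
  have hM : ρ * σ⁻¹ * ρ = cr • ρ := by
    rw [hρdef, auxB2_rho_mul, ← hρdef, ← hzdef, hzre, auxB2_coe_smul]
  have hMH : (cr • ρ : Matrix _ _ ℂ).IsHermitian := by
    have h1 : (cr • ρ)ᴴ = cr • ρᴴ := by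
      ext i j
      simp [Matrix.conjTranspose_apply]
    rw [Matrix.IsHermitian, h1, hρH]
  have hM2 : (cr • ρ) * (cr • ρ) = cr • (cr • ρ) := by
    rw [Matrix.smul_mul, Matrix.mul_smul, hρ2]
  have htr : ρ.trace = 1 := by
    rw [← hψ]
    simp [Matrix.trace, Matrix.diag, hρdef, Matrix.vecMulVec_apply, dotProduct, mul_comm]
  have hgeom : geomRel ρ σ = Real.logb 2 cr := by
    rw [geomRel, hmpow, hM, cfcM, dif_pos hMH,
      auxB2_cfc_eq _ hMH cr hM2 _ Real.logb_zero, if_neg hcrpos.ne', smul_smul,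
      div_mul_cancel₀ _ hcrpos.ne', Matrix.mul_smul, hρ2, trR, Matrix.trace_smul, htr]
    simp [Complex.real_smul]
  -- Dmax part
  have hσdet : IsUnit σ.det := isUnit_iff_ne_zero.mpr hσ.det_pos.ne'
  have hMLE : ∀ l : ℝ, MLE ρ ((2:ℝ)^l • σ) ↔ Real.logb 2 cr ≤ l := by
    intro l
    have h2l : (0:ℝ) < (2:ℝ)^l := Real.rpow_pos_of_pos (by norm_num) l
    rw [Real.logb_le_iff_le_rpow (by norm_num) hcrpos]
    constructor
    · intro hle
      have hq := hle.dotProduct_mulVec_nonneg (σ⁻¹ *ᵥ ψ)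
      have e1 : σ *ᵥ (σ⁻¹ *ᵥ ψ) = ψ := by
        rw [Matrix.mulVec_mulVec, Matrix.mul_nonsing_inv _ hσdet, Matrix.one_mulVec]
      have e2 : star (σ⁻¹ *ᵥ ψ) ⬝ᵥ ψ = (cr : ℂ) := by
        have h0 : star (σ⁻¹ *ᵥ ψ) ⬝ᵥ ψ = star (star ψ ⬝ᵥ (σ⁻¹ *ᵥ ψ)) :=
          Matrix.star_dotProduct _ _
        rw [h0, ← hzdef, hzre, RCLike.star_def, Complex.conj_ofReal]
      have e3 : star (σ⁻¹ *ᵥ ψ) ⬝ᵥ (((2:ℝ)^l • σ - ρ) *ᵥ (σ⁻¹ *ᵥ ψ))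
          = (((2:ℝ)^l * cr - cr * cr : ℝ) : ℂ) := by
        rw [Matrix.sub_mulVec, dotProduct_sub, Matrix.smul_mulVec, e1,
          dotProduct_smul, e2, hρdef, auxB2_vmv_mulVec, ← hzdef,
          dotProduct_smul, e2, hzre]
        push_cast
        rw [Complex.real_smul, smul_eq_mul]
        try ring
      rw [e3] at hq
      have : (0:ℝ) ≤ (2:ℝ)^l * cr - cr * cr := Complex.zero_le_real.mp hq
      nlinarith
    · intro hle
      refine PosSemidef.of_dotProduct_mulVec_nonneg ?_ ?_
      · show ((2:ℝ)^l • σ - ρ)ᴴ = _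
        have h1 : (((2:ℝ)^l : ℝ) • σ)ᴴ = ((2:ℝ)^l : ℝ) • σᴴ := by
          ext i j
          simp [Matrix.conjTranspose_apply]
        rw [Matrix.conjTranspose_sub, h1, hρH, hσ.1]
      · intro x
        obtain ⟨R, hR2, hRH⟩ : ∃ R : Matrix d d ℂ, R * R = σ ∧ R.IsHermitian := by
          open scoped MatrixOrder in
          exact ⟨CFC.sqrt σ, CFC.sqrt_mul_sqrt_self σ hσ.posSemidef.nonneg,
            (CFC.sqrt_nonneg σ).posSemidef.1⟩
        have hRdet : IsUnit R.det := by
          apply isUnit_iff_ne_zero.mpr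
          intro h
          apply hσ.det_pos.ne'
          rw [← hR2, Matrix.det_mul, h, mul_zero]
        have hRinv : (R⁻¹)ᴴ = R⁻¹ := hRH.inv
        set φ := R⁻¹ *ᵥ ψ with hφdef
        set y := R *ᵥ x with hydef
        have key0 : ∀ w : d → ℂ, star φ ⬝ᵥ w = star ψ ⬝ᵥ (R⁻¹ *ᵥ w) := by
          intro w
          rw [hφdef, Matrix.star_mulVec, hRinv, ← Matrix.dotProduct_mulVec]
        have key1 : star φ ⬝ᵥ y = star ψ ⬝ᵥ x := by
          rw [key0, hydef, Matrix.mulVec_mulVec, Matrix.nonsing_inv_mul _ hRdet,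
            Matrix.one_mulVec]
        have key2 : star φ ⬝ᵥ φ = (cr : ℂ) := by
          rw [key0, hφdef, Matrix.mulVec_mulVec, ← Matrix.mul_inv_rev, hR2, ← hzdef, hzre]
        have key3 : star y ⬝ᵥ y = star x ⬝ᵥ (σ *ᵥ x) := by
          rw [hydef, Matrix.star_mulVec, hRH, ← Matrix.dotProduct_mulVec,
            Matrix.mulVec_mulVec, hR2]
        have hqle := hσ.posSemidef.dotProduct_mulVec_nonneg x
        set q := (star x ⬝ᵥ (σ *ᵥ x)).re with hqdef
        have hq0 : 0 ≤ q := by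
          have := (Complex.le_def.mp hqle).1
          simpa using this
        have hqre : star x ⬝ᵥ (σ *ᵥ x) = (q : ℂ) := by
          have him := (Complex.le_def.mp hqle).2
          apply Complex.ext <;> simp [← him, hqdef]
        have hcs : Complex.normSq (star ψ ⬝ᵥ x) ≤ cr * q := by
          have := auxB2_cs φ y
          rw [key1, key2, key3, hqre] at this
          simpa using this
        have e4 : star x ⬝ᵥ (((2:ℝ)^l • σ - ρ) *ᵥ x)
            = (((2:ℝ)^l * q - Complex.normSq (star ψ ⬝ᵥ x) : ℝ) : ℂ) := by
          rw [Matrix.sub_mulVec, dotProduct_sub, Matrix.smul_mulVec,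
            dotProduct_smul, hqre, hρdef, auxB2_vmv_mulVec,
            dotProduct_smul]
          have hsx : star x ⬝ᵥ ψ = star (star ψ ⬝ᵥ x) :=
            Matrix.star_dotProduct _ _
          rw [hsx, RCLike.star_def]
          push_cast
          rw [Complex.real_smul, smul_eq_mul, Complex.mul_conj]
          try push_cast
          try ring
        rw [e4]
        apply Complex.zero_le_real.mpr
        have hcr2l : cr ≤ (2:ℝ)^l := hle
        nlinarith
  have hdmax : Dmax ρ σ = ((Real.logb 2 cr : ℝ) : EReal) := by
    rw [Dmax]
    apply le_antisymm
    · exact sInf_le ⟨Real.logb 2 cr, rfl, (hMLE _).mpr le_rfl⟩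
    · apply le_sInf
      rintro x ⟨l, rfl, hml⟩
      exact_mod_cast (hMLE l).mp hml
  exact ⟨hgeom, hdmax⟩

end
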